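/- Let n ≥ 2 and m_{n−1}, m_n ≥ 2. The minimum number of edges of an octahedral system without isolated vertex on vertex sets V_1,…,V_n with |V_1| = … = |V_{n−2}| = 2, |V_{n−1}| = m_{n−1} and |V_n| = m_n equals m_{n−1} + m_n − 2; that is, every such system has at least m_{n−1} + m_n − 2 edges and there exists one with exactly m_{n−1} + m_n − 2 edges. -/

import Mathlib

/-- An octahedral system: an `n`-uniform `n`-partite hypergraph on the vertex sets `V i`
(edges pick one vertex from each `V i`) satisfying the parity condition. -/
def IsOctahedralSystem {α : Type*} [DecidableEq α] {n : ℕ}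
    (V : Fin n → Finset α) (E : Finset (Fin n → α)) : Prop :=
  (∀ e ∈ E, ∀ i, e i ∈ V i) ∧
  ∀ X : Fin n → Finset α, (∀ i, X i ⊆ V i) → (∀ i, (X i).card = 2) →
    Even ((E.filter fun e => ∀ i, e i ∈ X i).card)

/-- Every vertex belongs to at least one edge. -/
def NoIsolatedVertex {α : Type*} {n : ℕ}
    (V : Fin n → Finset α) (E : Finset (Fin n → α)) : Prop :=
  ∀ i : Fin n, ∀ v ∈ V i, ∃ e ∈ E, e i = v

/-- `ν(2,…,2,m_{n−1},m_n) = m_{n−1} + m_n − 2`: every octahedral system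
without isolated vertex with `|V_1| = … = |V_{n−2}| = 2`, `|V_{n−1}| = a`, `|V_n| = b`
has at least `a + b − 2` edges, and some such system has exactly `a + b − 2` edges. -/

private lemma aux_mul {x y : ℕ} (hx : 1 ≤ x) (hy : 1 ≤ y) : x + y ≤ x * y + 1 := by
  nlinarith

private lemma colbound {α : Type*} [DecidableEq α] (A B : Finset α) (N : α → α → ℕ)
    (P : α → Prop) [DecidablePred P]
    (ha : 2 ≤ A.card)
    (hodd : ∀ v ∈ B, P v → ∀ u ∈ A, 1 ≤ N u v)
    (heven : ∀ v ∈ B, ¬ P v → ∃ u ∈ A, 2 ≤ N u v)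
    (hP : ∃ v ∈ B, P v) :
    A.card + B.card - 2 ≤ ∑ v ∈ B, ∑ u ∈ A, N u v := by
  have h1 : ∀ v ∈ B, (if P v then A.card else 2) ≤ ∑ u ∈ A, N u v := by
    intro v hv
    by_cases h : P v
    · simp only [if_pos h]
      calc A.card = ∑ _u ∈ A, 1 := by simp
      _ ≤ _ := Finset.sum_le_sum (fun u hu => hodd v hv h u hu)
    · simp only [if_neg h]
      obtain ⟨u, hu, h2⟩ := heven v hv h
      exact le_trans h2 (Finset.single_le_sum (f := fun u => N u v) (fun _ _ => Nat.zero_le _) hu)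
  have h2 : ∑ v ∈ B, (if P v then A.card else 2) ≤ ∑ v ∈ B, ∑ u ∈ A, N u v :=
    Finset.sum_le_sum h1
  rw [Finset.sum_ite, Finset.sum_const, Finset.sum_const] at h2
  simp only [smul_eq_mul] at h2
  have h3 : 1 ≤ (B.filter P).card := by
    obtain ⟨v, hv, hPv⟩ := hP
    exact Finset.card_pos.mpr ⟨v, Finset.mem_filter.mpr ⟨hv, hPv⟩⟩
  have h4 : (B.filter P).card + (B.filter (fun v => ¬ P v)).card = B.card :=
    Finset.card_filter_add_card_filter_not _
  set m := (B.filter P).card * A.card with hm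
  have h5 : (B.filter P).card + A.card ≤ m + 1 := aux_mul h3 (by omega)
  omega

private lemma rowbound {α : Type*} [DecidableEq α] (A B : Finset α) (N : α → α → ℕ)
    (P : α → Prop) [DecidablePred P]
    (hb : 2 ≤ B.card)
    (hodd : ∀ u ∈ A, P u → ∀ v ∈ B, 1 ≤ N u v)
    (heven : ∀ u ∈ A, ¬ P u → ∃ v ∈ B, 2 ≤ N u v)
    (hP : ∃ u ∈ A, P u) :
    A.card + B.card - 2 ≤ ∑ u ∈ A, ∑ v ∈ B, N u v := by
  have h := colbound B A (fun v u => N u v) P hb hodd heven hP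
  beta_reduce at h
  omega

private lemma cross_bound {α : Type*} [DecidableEq α] (A B : Finset α) (N : α → α → ℕ)
    (P Q : α → Prop) [DecidablePred P] [DecidablePred Q]
    (hodd : ∀ u ∈ A, ∀ v ∈ B, ¬ (P u ↔ Q v) → 1 ≤ N u v)
    (hP1 : ∃ u ∈ A, P u) (hP0 : ∃ u ∈ A, ¬ P u)
    (hQ1 : ∃ v ∈ B, Q v) (hQ0 : ∃ v ∈ B, ¬ Q v) :
    A.card + B.card - 2 ≤ ∑ u ∈ A, ∑ v ∈ B, N u v := by
  have inner1 : ∀ u ∈ A, P u → (B.filter (fun v => ¬ Q v)).card ≤ ∑ v ∈ B, N u v := by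
    intro u hu hPu
    calc (B.filter (fun v => ¬ Q v)).card = ∑ _v ∈ B.filter (fun v => ¬ Q v), 1 := by simp
    _ ≤ ∑ v ∈ B.filter (fun v => ¬ Q v), N u v := by
        refine Finset.sum_le_sum fun v hv => ?_
        obtain ⟨hvB, hQv⟩ := Finset.mem_filter.mp hv
        exact hodd u hu v hvB (by tauto)
    _ ≤ ∑ v ∈ B, N u v := Finset.sum_le_sum_of_subset (Finset.filter_subset _ _)
  have inner0 : ∀ u ∈ A, ¬ P u → (B.filter Q).card ≤ ∑ v ∈ B, N u v := by
    intro u hu hPu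
    calc (B.filter Q).card = ∑ _v ∈ B.filter Q, 1 := by simp
    _ ≤ ∑ v ∈ B.filter Q, N u v := by
        refine Finset.sum_le_sum fun v hv => ?_
        obtain ⟨hvB, hQv⟩ := Finset.mem_filter.mp hv
        exact hodd u hu v hvB (by tauto)
    _ ≤ ∑ v ∈ B, N u v := Finset.sum_le_sum_of_subset (Finset.filter_subset _ _)
  have hsplit : ∑ u ∈ A.filter P, ∑ v ∈ B, N u v + ∑ u ∈ A.filter (fun u => ¬ P u), ∑ v ∈ B, N u v
      = ∑ u ∈ A, ∑ v ∈ B, N u v := Finset.sum_filter_add_sum_filter_not _ _ _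
  have b1 : (A.filter P).card * (B.filter (fun v => ¬ Q v)).card ≤
      ∑ u ∈ A.filter P, ∑ v ∈ B, N u v := by
    calc (A.filter P).card * (B.filter (fun v => ¬ Q v)).card
        = ∑ _u ∈ A.filter P, (B.filter (fun v => ¬ Q v)).card := by
          rw [Finset.sum_const, smul_eq_mul]
    _ ≤ _ := Finset.sum_le_sum fun u hu => by
          obtain ⟨huA, hPu⟩ := Finset.mem_filter.mp hu
          exact inner1 u huA hPu
  have b0 : (A.filter (fun u => ¬ P u)).card * (B.filter Q).card ≤
      ∑ u ∈ A.filter (fun u => ¬ P u), ∑ v ∈ B, N u v := by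
    calc (A.filter (fun u => ¬ P u)).card * (B.filter Q).card
        = ∑ _u ∈ A.filter (fun u => ¬ P u), (B.filter Q).card := by
          rw [Finset.sum_const, smul_eq_mul]
    _ ≤ _ := Finset.sum_le_sum fun u hu => by
          obtain ⟨huA, hPu⟩ := Finset.mem_filter.mp hu
          exact inner0 u huA hPu
  have cA : (A.filter P).card + (A.filter (fun u => ¬ P u)).card = A.card :=
    Finset.card_filter_add_card_filter_not _
  have cB : (B.filter Q).card + (B.filter (fun v => ¬ Q v)).card = B.card :=
    Finset.card_filter_add_card_filter_not _
  have nA1 : 1 ≤ (A.filter P).card := by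
    obtain ⟨u, hu, h⟩ := hP1; exact Finset.card_pos.mpr ⟨u, Finset.mem_filter.mpr ⟨hu, h⟩⟩
  have nA0 : 1 ≤ (A.filter (fun u => ¬ P u)).card := by
    obtain ⟨u, hu, h⟩ := hP0; exact Finset.card_pos.mpr ⟨u, Finset.mem_filter.mpr ⟨hu, h⟩⟩
  have nB1 : 1 ≤ (B.filter Q).card := by
    obtain ⟨v, hv, h⟩ := hQ1; exact Finset.card_pos.mpr ⟨v, Finset.mem_filter.mpr ⟨hv, h⟩⟩
  have nB0 : 1 ≤ (B.filter (fun v => ¬ Q v)).card := by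
    obtain ⟨v, hv, h⟩ := hQ0; exact Finset.card_pos.mpr ⟨v, Finset.mem_filter.mpr ⟨hv, h⟩⟩
  set m1 := (A.filter P).card * (B.filter (fun v => ¬ Q v)).card with hm1
  set m0 := (A.filter (fun u => ¬ P u)).card * (B.filter Q).card with hm0
  have e1 : (A.filter P).card + (B.filter (fun v => ¬ Q v)).card ≤ m1 + 1 := aux_mul nA1 nB0
  have e0 : (A.filter (fun u => ¬ P u)).card + (B.filter Q).card ≤ m0 + 1 := aux_mul nA0 nB1
  omega

private lemma alleven_bound {α : Type*} [DecidableEq α] (A B : Finset α) (N : α → α → ℕ)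
    (heven : ∀ u ∈ A, ∀ v ∈ B, N u v % 2 = 0)
    (hrow : ∀ u ∈ A, ∃ v ∈ B, 1 ≤ N u v)
    (hcol : ∀ v ∈ B, ∃ u ∈ A, 1 ≤ N u v) :
    A.card + B.card - 2 ≤ ∑ u ∈ A, ∑ v ∈ B, N u v := by
  have h1 : A.card * 2 ≤ ∑ u ∈ A, ∑ v ∈ B, N u v := by
    calc A.card * 2 = ∑ _u ∈ A, 2 := by rw [Finset.sum_const, smul_eq_mul]
    _ ≤ _ := by
      refine Finset.sum_le_sum fun u hu => ?_
      obtain ⟨v, hv, h⟩ := hrow u hu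
      have hev := heven u hu v hv
      have h2 : 2 ≤ N u v := by omega
      exact le_trans h2 (Finset.single_le_sum (f := fun v => N u v)
        (fun _ _ => Nat.zero_le _) hv)
  have h2 : B.card * 2 ≤ ∑ u ∈ A, ∑ v ∈ B, N u v := by
    rw [Finset.sum_comm]
    calc B.card * 2 = ∑ _v ∈ B, 2 := by rw [Finset.sum_const, smul_eq_mul]
    _ ≤ _ := by
      refine Finset.sum_le_sum fun v hv => ?_
      obtain ⟨u, hu, h⟩ := hcol v hv
      have hev := heven u hu v hv
      have h2 : 2 ≤ N u v := by omega
      exact le_trans h2 (Finset.single_le_sum (f := fun u => N u v)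
        (fun _ _ => Nat.zero_le _) hu)
  omega

private lemma allodd_bound {α : Type*} [DecidableEq α] (A B : Finset α) (N : α → α → ℕ)
    (ha : 1 ≤ A.card) (hb : 1 ≤ B.card)
    (hodd : ∀ u ∈ A, ∀ v ∈ B, 1 ≤ N u v) :
    A.card + B.card - 2 ≤ ∑ u ∈ A, ∑ v ∈ B, N u v := by
  have h1 : A.card * B.card ≤ ∑ u ∈ A, ∑ v ∈ B, N u v := by
    calc A.card * B.card = ∑ _u ∈ A, B.card := by rw [Finset.sum_const, smul_eq_mul]
    _ ≤ _ := by
      refine Finset.sum_le_sum fun u hu => ?_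
      calc B.card = ∑ _v ∈ B, 1 := by simp
      _ ≤ _ := Finset.sum_le_sum fun v hv => hodd u hu v hv
  set m := A.card * B.card with hm
  have := aux_mul ha hb
  omega

private lemma key {α : Type*} [DecidableEq α] (A B : Finset α) (N : α → α → ℕ)
    (ha : 2 ≤ A.card) (hb : 2 ≤ B.card)
    (hpar : ∀ u ∈ A, ∀ u' ∈ A, ∀ v ∈ B, ∀ v' ∈ B, u ≠ u' → v ≠ v' →
      (N u v + N u v' + N u' v + N u' v') % 2 = 0)
    (hrow : ∀ u ∈ A, ∃ v ∈ B, 1 ≤ N u v)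
    (hcol : ∀ v ∈ B, ∃ u ∈ A, 1 ≤ N u v) :
    A.card + B.card - 2 ≤ ∑ u ∈ A, ∑ v ∈ B, N u v := by
  classical
  obtain ⟨u0, hu0⟩ := Finset.card_pos.mp (by omega : 0 < A.card)
  obtain ⟨v0, hv0⟩ := Finset.card_pos.mp (by omega : 0 < B.card)
  have hf : ∀ u ∈ A, ∀ v ∈ B, N u v % 2 = (N u v0 + N u0 v + N u0 v0) % 2 := by
    intro u hu v hv
    by_cases h1 : u = u0
    · subst h1; omega
    · by_cases h2 : v = v0
      · subst h2; omega
      · have := hpar u hu u0 hu0 v hv v0 hv0 h1 h2; omega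
  have hiff : ∀ u ∈ A, ∀ v ∈ B,
      (N u v % 2 = 1 ↔ ¬ (N u v0 % 2 = 1 ↔ (N u0 v + N u0 v0) % 2 = 1)) := by
    intro u hu v hv; have := hf u hu v hv; omega
  by_cases hA1 : ∃ u ∈ A, N u v0 % 2 = 1
  · by_cases hA0 : ∃ u ∈ A, ¬ N u v0 % 2 = 1
    · by_cases hB1 : ∃ v ∈ B, (N u0 v + N u0 v0) % 2 = 1
      · by_cases hB0 : ∃ v ∈ B, ¬ (N u0 v + N u0 v0) % 2 = 1
        · -- both non-constant
          exact cross_bound A B N _ _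
            (fun u hu v hv h => by have := (hiff u hu v hv).mpr h; omega)
            hA1 hA0 hB1 hB0
        · -- B constant true : odd rows are those with ¬ pA
          push_neg at hB0
          refine rowbound A B N (fun u => ¬ N u v0 % 2 = 1) hb ?_ ?_ hA0
          · intro u hu hPu v hv
            have := (hiff u hu v hv).mpr (by have := hB0 v hv; tauto)
            omega
          · intro u hu hPu
            push_neg at hPu
            obtain ⟨v, hv, h1⟩ := hrow u hu
            have h2 : ¬ N u v % 2 = 1 := by
              intro h
              have := (hiff u hu v hv).mp h
              have := hB0 v hv
              tauto
            exact ⟨v, hv, by omega⟩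
      · -- B constant false : odd rows are those with pA
        push_neg at hB1
        refine rowbound A B N (fun u => N u v0 % 2 = 1) hb ?_ ?_ hA1
        · intro u hu hPu v hv
          have := (hiff u hu v hv).mpr (by have := hB1 v hv; tauto)
          omega
        · intro u hu hPu
          obtain ⟨v, hv, h1⟩ := hrow u hu
          have h2 : ¬ N u v % 2 = 1 := by
            intro h
            have := (hiff u hu v hv).mp h
            have := hB1 v hv
            tauto
          exact ⟨v, hv, by omega⟩
    · -- A constant true
      push_neg at hA0
      by_cases hB0 : ∃ v ∈ B, ¬ (N u0 v + N u0 v0) % 2 = 1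
      · -- odd columns: ¬ pB
        rw [Finset.sum_comm]
        refine colbound A B N (fun v => ¬ (N u0 v + N u0 v0) % 2 = 1) ha ?_ ?_ hB0
        · intro v hv hPv u hu
          have := (hiff u hu v hv).mpr (by have := hA0 u hu; tauto)
          omega
        · intro v hv hPv
          push_neg at hPv
          obtain ⟨u, hu, h1⟩ := hcol v hv
          have h2 : ¬ N u v % 2 = 1 := by
            intro h
            have := (hiff u hu v hv).mp h
            have := hA0 u hu
            tauto
          exact ⟨u, hu, by omega⟩
      · -- all pA true, all pB true : all even
        push_neg at hB0
        refine alleven_bound A B N ?_ hrow hcol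
        intro u hu v hv
        have h2 : ¬ N u v % 2 = 1 := by
          intro h
          have := (hiff u hu v hv).mp h
          have := hA0 u hu
          have := hB0 v hv
          tauto
        omega
  · -- A constant false
    push_neg at hA1
    by_cases hB1 : ∃ v ∈ B, (N u0 v + N u0 v0) % 2 = 1
    · -- odd columns: pB
      rw [Finset.sum_comm]
      refine colbound A B N (fun v => (N u0 v + N u0 v0) % 2 = 1) ha ?_ ?_ hB1
      · intro v hv hPv u hu
        have := (hiff u hu v hv).mpr (by have := hA1 u hu; tauto)
        omega
      · intro v hv hPv
        obtain ⟨u, hu, h1⟩ := hcol v hv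
        have h2 : ¬ N u v % 2 = 1 := by
          intro h
          have := (hiff u hu v hv).mp h
          have := hA1 u hu
          tauto
        exact ⟨u, hu, by omega⟩
    · -- all pA false, all pB false : all even
      push_neg at hB1
      refine alleven_bound A B N ?_ hrow hcol
      intro u hu v hv
      have h2 : ¬ N u v % 2 = 1 := by
        intro h
        have := (hiff u hu v hv).mp h
        have := hA1 u hu
        have := hB1 v hv
        tauto
      omega

private def off (n a b k : ℕ) : ℕ :=
  2 * k + (if n - 1 ≤ k then a - 2 else 0) + (if n ≤ k then b - 2 else 0)

private lemma off_mono {n a b : ℕ} {j k : ℕ} (h : j ≤ k) : off n a b j ≤ off n a b k := by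
  unfold off; split_ifs <;> omega

private lemma off_step {n a b : ℕ} (k : ℕ) : off n a b k + 2 ≤ off n a b (k + 1) := by
  unfold off; split_ifs <;> omega

private lemma off_low {n a b k : ℕ} (hn : 2 ≤ n) (h : k + 1 ≤ n - 2) :
    off n a b (k + 1) = off n a b k + 2 := by
  unfold off; split_ifs <;> omega

private lemma off_gap1 {n a b : ℕ} (hn : 2 ≤ n) (ha : 2 ≤ a) :
    off n a b (n - 1) = off n a b (n - 2) + a := by
  unfold off; split_ifs <;> omega

private lemma off_gap2 {n a b : ℕ} (hn : 2 ≤ n) (hb : 2 ≤ b) :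
    off n a b n = off n a b (n - 1) + b := by
  unfold off; split_ifs <;> omega

private def S0 (a b : ℕ) : Finset (ℕ × ℕ) :=
  ((Finset.Ico 1 b).image fun v => (0, v)) ∪ ((Finset.Ico 1 a).image fun u => (u, 0))

private lemma mem_S0 {a b : ℕ} {p : ℕ × ℕ} :
    p ∈ S0 a b ↔ (p.1 = 0 ∧ 1 ≤ p.2 ∧ p.2 < b) ∨ (1 ≤ p.1 ∧ p.1 < a ∧ p.2 = 0) := by
  obtain ⟨u, v⟩ := p
  simp only [S0, Finset.mem_union, Finset.mem_image, Finset.mem_Ico, Prod.mk.injEq]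
  constructor
  · rintro (⟨w, hw, h1, h2⟩ | ⟨w, hw, h1, h2⟩) <;> omega
  · rintro (⟨h1, h2, h3⟩ | ⟨h1, h2, h3⟩)
    · exact Or.inl ⟨v, by omega, by omega, rfl⟩
    · exact Or.inr ⟨u, by omega, rfl, by omega⟩

private lemma card_S0 {a b : ℕ} (ha : 1 ≤ a) (hb : 1 ≤ b) : (S0 a b).card = a + b - 2 := by
  have hinj1 : Function.Injective (fun v : ℕ => ((0, v) : ℕ × ℕ)) := by
    intro x y h; simpa using congrArg Prod.snd h
  have hinj2 : Function.Injective (fun u : ℕ => ((u, 0) : ℕ × ℕ)) := by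
    intro x y h; simpa using congrArg Prod.fst h
  have hdisj : Disjoint ((Finset.Ico 1 b).image fun v => ((0, v) : ℕ × ℕ))
      ((Finset.Ico 1 a).image fun u => (u, 0)) := by
    rw [Finset.disjoint_left]
    rintro ⟨x, y⟩ h1 h2
    simp only [Finset.mem_image, Finset.mem_Ico, Prod.mk.injEq] at h1 h2
    obtain ⟨w, hw, hw1, hw2⟩ := h1
    obtain ⟨w', hw', hw1', hw2'⟩ := h2
    omega
  rw [S0, Finset.card_union_of_disjoint hdisj,
    Finset.card_image_of_injective _ hinj1, Finset.card_image_of_injective _ hinj2,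
    Nat.card_Ico, Nat.card_Ico]
  omega

private def edg (n a b : ℕ) (p : ℕ × ℕ) : Fin n → ℕ := fun i =>
  if (i : ℕ) < n - 2 then off n a b i + (if p = (1, 0) then 1 else 0)
  else if (i : ℕ) = n - 2 then off n a b (n - 2) + p.1
  else off n a b (n - 1) + p.2

private lemma edg_lt {n a b : ℕ} {p : ℕ × ℕ} {i : Fin n} (h : (i : ℕ) < n - 2) :
    edg n a b p i = off n a b i + (if p = (1, 0) then 1 else 0) := by
  simp [edg, h]

private lemma edg_i1 {n a b : ℕ} {p : ℕ × ℕ} {i : Fin n} (h : (i : ℕ) = n - 2) :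
    edg n a b p i = off n a b (n - 2) + p.1 := by
  rw [edg, if_neg (by omega), if_pos h]

private lemma edg_i2 {n a b : ℕ} (hn : 2 ≤ n) {p : ℕ × ℕ} {i : Fin n} (h : (i : ℕ) = n - 1) :
    edg n a b p i = off n a b (n - 1) + p.2 := by
  rw [edg, if_neg (by omega), if_neg (by omega)]

private lemma edg_injOn {n a b : ℕ} (hn : 2 ≤ n) :
    Set.InjOn (edg n a b) (S0 a b : Set (ℕ × ℕ)) := by
  intro p _ q _ h
  have h1 := congrFun h ⟨n - 2, by omega⟩
  have h2 := congrFun h ⟨n - 1, by omega⟩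
  rw [edg_i1 rfl, edg_i1 rfl] at h1
  rw [edg_i2 hn rfl, edg_i2 hn rfl] at h2
  exact Prod.ext (by omega) (by omega)

private def Vc (n a b : ℕ) : Fin n → Finset ℕ :=
  fun i => Finset.Ico (off n a b i) (off n a b ((i : ℕ) + 1))

private def Ec (n a b : ℕ) : Finset (Fin n → ℕ) := (S0 a b).image (edg n a b)

private lemma Vc_disj {n a b : ℕ} : ∀ i j : Fin n, i ≠ j → Disjoint (Vc n a b i) (Vc n a b j) := by
  have key2 : ∀ i j : Fin n, (i : ℕ) < (j : ℕ) → Disjoint (Vc n a b i) (Vc n a b j) := by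
    intro i j hij
    rw [Finset.disjoint_left]
    intro x hx1 hx2
    rw [Vc, Finset.mem_Ico] at hx1 hx2
    have := off_mono (n := n) (a := a) (b := b) (show (i : ℕ) + 1 ≤ (j : ℕ) by omega)
    omega
  intro i j hij
  rcases lt_trichotomy (i : ℕ) (j : ℕ) with h | h | h
  · exact key2 i j h
  · exact absurd (Fin.ext h) hij
  · exact (key2 j i h).symm

private lemma card_Vc_lt {n a b : ℕ} (hn : 2 ≤ n) {i : Fin n} (h : (i : ℕ) < n - 2) :
    (Vc n a b i).card = 2 := by
  rw [Vc, Nat.card_Ico, off_low hn (by omega)]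
  omega

private lemma card_Vc_1 {n a b : ℕ} (hn : 2 ≤ n) (ha : 2 ≤ a) {i : Fin n} (h : (i : ℕ) = n - 2) :
    (Vc n a b i).card = a := by
  have e : (i : ℕ) + 1 = n - 1 := by omega
  rw [Vc, Nat.card_Ico, e, h, off_gap1 hn ha]
  omega

private lemma card_Vc_2 {n a b : ℕ} (hn : 2 ≤ n) (ha : 2 ≤ a) (hb : 2 ≤ b) {i : Fin n}
    (h : (i : ℕ) = n - 1) : (Vc n a b i).card = b := by
  have e : (i : ℕ) + 1 = n := by have := i.isLt; omega
  rw [Vc, Nat.card_Ico, e, h, off_gap2 hn hb, off_gap1 hn ha]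
  omega

private lemma edg_mem {n a b : ℕ} (hn : 2 ≤ n) (ha : 2 ≤ a) (hb : 2 ≤ b) {p : ℕ × ℕ} (hp : p ∈ S0 a b) (i : Fin n) :
    edg n a b p i ∈ Vc n a b i := by
  have hiLt := i.isLt
  have hpb := mem_S0.mp hp
  rw [Vc, Finset.mem_Ico]
  by_cases h1 : (i : ℕ) < n - 2
  · rw [edg_lt h1]
    have := off_step (n := n) (a := a) (b := b) (i : ℕ)
    split_ifs <;> omega
  · by_cases h2 : (i : ℕ) = n - 2
    · rw [edg_i1 h2, h2]
      have e : n - 2 + 1 = n - 1 := by omega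
      rw [e, off_gap1 hn ha]
      omega
    · have h3 : (i : ℕ) = n - 1 := by omega
      rw [edg_i2 hn h3, h3]
      have e : n - 1 + 1 = n := by omega
      rw [e, off_gap2 hn hb]
      omega

private lemma chi_even {a b q1 q2 r1 r2 : ℕ} (hq1 : q1 < a) (hq2 : q2 < a)
    (hr1 : r1 < b) (hr2 : r2 < b) :
    Even ((if ((q1, r1) : ℕ × ℕ) ∈ S0 a b then 1 else 0)
      + (if ((q1, r2) : ℕ × ℕ) ∈ S0 a b then 1 else 0)
      + ((if ((q2, r1) : ℕ × ℕ) ∈ S0 a b then 1 else 0)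
      + (if ((q2, r2) : ℕ × ℕ) ∈ S0 a b then 1 else 0))) := by
  rw [Nat.even_iff]
  simp only [mem_S0]
  split_ifs <;> omega

private lemma parity_Ec {n a b : ℕ} (hn : 2 ≤ n) (ha : 2 ≤ a) (hb : 2 ≤ b)
    (i₁ i₂ : Fin n) (h1 : (i₁ : ℕ) = n - 2) (h2 : (i₂ : ℕ) = n - 1)
    (X : Fin n → Finset ℕ) (hsub : ∀ i, X i ⊆ Vc n a b i) (hcard : ∀ i, (X i).card = 2) :
    Even (((Ec n a b).filter fun e => ∀ i, e i ∈ X i).card) := by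
  classical
  obtain ⟨x1, x2, hx12, hX1⟩ := Finset.card_eq_two.mp (hcard i₁)
  obtain ⟨y1, y2, hy12, hX2⟩ := Finset.card_eq_two.mp (hcard i₂)
  have hx1V : x1 ∈ Vc n a b i₁ := hsub i₁ (hX1 ▸ Finset.mem_insert_self _ _)
  have hx2V : x2 ∈ Vc n a b i₁ := hsub i₁
    (hX1 ▸ Finset.mem_insert_of_mem (Finset.mem_singleton_self _))
  have hy1V : y1 ∈ Vc n a b i₂ := hsub i₂ (hX2 ▸ Finset.mem_insert_self _ _)
  have hy2V : y2 ∈ Vc n a b i₂ := hsub i₂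
    (hX2 ▸ Finset.mem_insert_of_mem (Finset.mem_singleton_self _))
  have e1 : n - 2 + 1 = n - 1 := by omega
  have e2 : n - 1 + 1 = n := by omega
  rw [Vc, Finset.mem_Ico, h1, e1, off_gap1 hn ha] at hx1V hx2V
  rw [Vc, Finset.mem_Ico, h2, e2, off_gap2 hn hb] at hy1V hy2V
  obtain ⟨q1, hq1a, hq1e⟩ : ∃ q, q < a ∧ x1 = off n a b (n - 2) + q :=
    ⟨x1 - off n a b (n - 2), by omega, by omega⟩
  obtain ⟨q2, hq2a, hq2e⟩ : ∃ q, q < a ∧ x2 = off n a b (n - 2) + q :=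
    ⟨x2 - off n a b (n - 2), by omega, by omega⟩
  obtain ⟨r1, hr1b, hr1e⟩ : ∃ r, r < b ∧ y1 = off n a b (n - 1) + r :=
    ⟨y1 - off n a b (n - 1), by omega, by omega⟩
  obtain ⟨r2, hr2b, hr2e⟩ : ∃ r, r < b ∧ y2 = off n a b (n - 1) + r :=
    ⟨y2 - off n a b (n - 1), by omega, by omega⟩
  have hq12 : q1 ≠ q2 := by intro h; apply hx12; omega
  have hr12 : r1 ≠ r2 := by intro h; apply hy12; omega
  have hmem1 : ∀ t, (off n a b (n - 2) + t ∈ X i₁ ↔ (t = q1 ∨ t = q2)) := by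
    intro t
    rw [hX1]
    simp only [Finset.mem_insert, Finset.mem_singleton]
    omega
  have hmem2 : ∀ t, (off n a b (n - 1) + t ∈ X i₂ ↔ (t = r1 ∨ t = r2)) := by
    intro t
    rw [hX2]
    simp only [Finset.mem_insert, Finset.mem_singleton]
    omega
  have hfe : (Ec n a b).filter (fun e => ∀ i, e i ∈ X i)
      = ((S0 a b).filter fun p => (p.1 = q1 ∨ p.1 = q2) ∧ (p.2 = r1 ∨ p.2 = r2)).image
        (edg n a b) := by
    rw [Ec, Finset.filter_image]
    congr 1
    apply Finset.filter_congr
    intro p hp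
    constructor
    · intro h
      have m1 := h i₁
      have m2 := h i₂
      rw [edg_i1 h1] at m1
      rw [edg_i2 hn h2] at m2
      exact ⟨(hmem1 p.1).mp m1, (hmem2 p.2).mp m2⟩
    · rintro ⟨c1, c2⟩ i
      by_cases hi : (i : ℕ) < n - 2
      · have hXV : X i = Vc n a b i :=
          Finset.eq_of_subset_of_card_le (hsub i) (by rw [hcard i, card_Vc_lt hn hi])
        rw [hXV]
        exact edg_mem hn ha hb hp i
      · by_cases hi2 : (i : ℕ) = n - 2
        · have : i = i₁ := Fin.ext (by omega)
          rw [this, edg_i1 h1]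
          exact (hmem1 p.1).mpr c1
        · have hi3 : (i : ℕ) = n - 1 := by have := i.isLt; omega
          have : i = i₂ := Fin.ext (by omega)
          rw [this, edg_i2 hn h2]
          exact (hmem2 p.2).mpr c2
  rw [hfe]
  rw [Finset.card_image_of_injOn ((edg_injOn hn).mono (by
    intro p hp
    exact (Finset.mem_filter.mp hp).1))]
  have hset : (S0 a b).filter (fun p => (p.1 = q1 ∨ p.1 = q2) ∧ (p.2 = r1 ∨ p.2 = r2))
      = (({q1, q2} : Finset ℕ) ×ˢ ({r1, r2} : Finset ℕ)).filter (fun p => p ∈ S0 a b) := by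
    ext p
    simp only [Finset.mem_filter, Finset.mem_product, Finset.mem_insert, Finset.mem_singleton]
    tauto
  rw [hset, Finset.card_filter, Finset.sum_product, Finset.sum_pair hq12,
    Finset.sum_pair hr12, Finset.sum_pair hr12]
  exact chi_even hq1a hq2a hr1b hr2b

private lemma cover_Ec {n a b : ℕ} (hn : 2 ≤ n) (ha : 2 ≤ a) (hb : 2 ≤ b) :
    NoIsolatedVertex (Vc n a b) (Ec n a b) := by
  intro i x hx
  have hiLt := i.isLt
  rw [Vc, Finset.mem_Ico] at hx
  have hmem01 : ((0, 1) : ℕ × ℕ) ∈ S0 a b := mem_S0.mpr (Or.inl ⟨rfl, le_refl 1, hb⟩)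
  have hmem10 : ((1, 0) : ℕ × ℕ) ∈ S0 a b := mem_S0.mpr (Or.inr ⟨le_refl 1, ha, rfl⟩)
  by_cases hi : (i : ℕ) < n - 2
  · rw [off_low hn (by omega)] at hx
    by_cases hc : x = off n a b i
    · refine ⟨edg n a b (0, 1), Finset.mem_image_of_mem _ hmem01, ?_⟩
      rw [edg_lt hi, if_neg (by simp)]
      omega
    · refine ⟨edg n a b (1, 0), Finset.mem_image_of_mem _ hmem10, ?_⟩
      rw [edg_lt hi, if_pos rfl]
      omega
  · by_cases hi2 : (i : ℕ) = n - 2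
    · rw [hi2] at hx
      have e1 : n - 2 + 1 = n - 1 := by omega
      rw [e1, off_gap1 hn ha] at hx
      by_cases hc : x = off n a b (n - 2)
      · exact ⟨edg n a b (0, 1), Finset.mem_image_of_mem _ hmem01, by rw [edg_i1 hi2]; omega⟩
      · have hu : ((x - off n a b (n - 2), 0) : ℕ × ℕ) ∈ S0 a b :=
          mem_S0.mpr (Or.inr ⟨by omega, by omega, rfl⟩)
        exact ⟨_, Finset.mem_image_of_mem _ hu, by rw [edg_i1 hi2]; omega⟩
    · have hi3 : (i : ℕ) = n - 1 := by omega
      rw [hi3] at hx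
      have e2 : n - 1 + 1 = n := by omega
      rw [e2, off_gap2 hn hb] at hx
      by_cases hc : x = off n a b (n - 1)
      · exact ⟨edg n a b (1, 0), Finset.mem_image_of_mem _ hmem10, by rw [edg_i2 hn hi3]; omega⟩
      · have hv : ((0, x - off n a b (n - 1)) : ℕ × ℕ) ∈ S0 a b :=
          mem_S0.mpr (Or.inl ⟨rfl, by omega, by omega⟩)
        exact ⟨_, Finset.mem_image_of_mem _ hv, by rw [edg_i2 hn hi3]; omega⟩

private lemma construction (n a b : ℕ) (hn : 2 ≤ n) (ha : 2 ≤ a) (hb : 2 ≤ b) :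
    ∃ (V : Fin n → Finset ℕ) (E : Finset (Fin n → ℕ)),
      (∀ i j : Fin n, i ≠ j → Disjoint (V i) (V j)) ∧
      (∀ i : Fin n, (i : ℕ) < n - 2 → (V i).card = 2) ∧
      (V ⟨n - 2, Nat.sub_lt (by omega) (by omega)⟩).card = a ∧
      (V ⟨n - 1, Nat.sub_lt (by omega) (by omega)⟩).card = b ∧
      IsOctahedralSystem V E ∧ NoIsolatedVertex V E ∧
      E.card = a + b - 2 := by
  refine ⟨Vc n a b, Ec n a b, Vc_disj, fun i hi => card_Vc_lt hn hi,
    card_Vc_1 hn ha rfl, card_Vc_2 hn ha hb rfl,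
    ⟨fun e he i => ?_, fun X hsub hcard =>
      parity_Ec hn ha hb ⟨n - 2, by omega⟩ ⟨n - 1, by omega⟩ rfl rfl X hsub hcard⟩,
    cover_Ec hn ha hb, ?_⟩
  · obtain ⟨p, hp, rfl⟩ := Finset.mem_image.mp he
    exact edg_mem hn ha hb hp i
  · rw [Ec, Finset.card_image_of_injOn (edg_injOn hn), card_S0 (by omega) (by omega)]

set_option maxHeartbeats 1000000 in
private lemma lb (n a b : ℕ) (hn : 2 ≤ n) (ha : 2 ≤ a) (hb : 2 ≤ b)
    (α : Type) [DecidableEq α] (V : Fin n → Finset α) (E : Finset (Fin n → α))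
    (hdisj : ∀ i j : Fin n, i ≠ j → Disjoint (V i) (V j))
    (h2 : ∀ i : Fin n, (i : ℕ) < n - 2 → (V i).card = 2)
    (i₁ i₂ : Fin n) (hv1 : (i₁ : ℕ) = n - 2) (hv2 : (i₂ : ℕ) = n - 1)
    (hA : (V i₁).card = a)
    (hB : (V i₂).card = b)
    (hoct : IsOctahedralSystem V E) (hniso : NoIsolatedVertex V E) :
    a + b - 2 ≤ E.card := by
  classical
  obtain ⟨hEV, hpar⟩ := hoct
  have hne : i₁ ≠ i₂ := by
    intro h
    rw [h] at hv1
    omega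
  set N : α → α → ℕ := fun u v => (E.filter fun e => e i₁ = u ∧ e i₂ = v).card with hN
  -- (1) total count
  have hcard : E.card = ∑ u ∈ V i₁, ∑ v ∈ V i₂, N u v := by
    have h := Finset.card_eq_sum_card_fiberwise
      (f := fun e => (e i₁, e i₂)) (s := E) (t := V i₁ ×ˢ V i₂)
      (fun e he => Finset.mem_product.mpr ⟨hEV e he i₁, hEV e he i₂⟩)
    rw [h, Finset.sum_product]
    refine Finset.sum_congr rfl fun u hu => Finset.sum_congr rfl fun v hv => ?_
    congr 1
    apply Finset.filter_congr
    intro e he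
    simp [Prod.ext_iff]
  -- (2) parity
  have hparN : ∀ u ∈ V i₁, ∀ u' ∈ V i₁, ∀ v ∈ V i₂, ∀ v' ∈ V i₂, u ≠ u' → v ≠ v' →
      (N u v + N u v' + N u' v + N u' v') % 2 = 0 := by
    intro u hu u' hu' v hv v' hv' huu' hvv'
    set X : Fin n → Finset α :=
      fun i => if i = i₁ then {u, u'} else if i = i₂ then {v, v'} else V i with hX
    have hX1 : X i₁ = {u, u'} := by simp [hX]
    have hX2 : X i₂ = {v, v'} := by simp [hX, hne.symm]
    have hXo : ∀ i, i ≠ i₁ → i ≠ i₂ → X i = V i := by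
      intro i h1 h2'
      simp [hX, h1, h2']
    have hsub : ∀ i, X i ⊆ V i := by
      intro i
      by_cases h1 : i = i₁
      · subst h1; rw [hX1]; intro x hx
        rcases Finset.mem_insert.mp hx with h | h
        · subst h; exact hu
        · rw [Finset.mem_singleton.mp h]; exact hu'
      · by_cases h2' : i = i₂
        · subst h2'; rw [hX2]; intro x hx
          rcases Finset.mem_insert.mp hx with h | h
          · subst h; exact hv
          · rw [Finset.mem_singleton.mp h]; exact hv'
        · rw [hXo i h1 h2']
    have hcardX : ∀ i, (X i).card = 2 := by
      intro i
      by_cases h1 : i = i₁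
      · subst h1; rw [hX1]; exact Finset.card_pair huu'
      · by_cases h2' : i = i₂
        · subst h2'; rw [hX2]; exact Finset.card_pair hvv'
        · rw [hXo i h1 h2']
          apply h2
          have e1 : (i : ℕ) ≠ (i₁ : ℕ) := fun h => h1 (Fin.ext h)
          have e2 : (i : ℕ) ≠ (i₂ : ℕ) := fun h => h2' (Fin.ext h)
          have := i.isLt
          omega
    have hev := hpar X hsub hcardX
    have hfe : E.filter (fun e => ∀ i, e i ∈ X i)
        = E.filter (fun e => (e i₁ = u ∨ e i₁ = u') ∧ (e i₂ = v ∨ e i₂ = v')) := by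
      apply Finset.filter_congr
      intro e he
      constructor
      · intro h
        have h1 := h i₁; have h2' := h i₂
        rw [hX1] at h1; rw [hX2] at h2'
        simp only [Finset.mem_insert, Finset.mem_singleton] at h1 h2'
        exact ⟨h1, h2'⟩
      · intro ⟨h1, h2'⟩ i
        by_cases e1 : i = i₁
        · subst e1; rw [hX1]; simp only [Finset.mem_insert, Finset.mem_singleton]; exact h1
        · by_cases e2 : i = i₂
          · subst e2; rw [hX2]; simp only [Finset.mem_insert, Finset.mem_singleton]; exact h2'
          · rw [hXo i e1 e2]; exact hEV e he i
    rw [hfe] at hev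
    have hsum : (E.filter (fun e => (e i₁ = u ∨ e i₁ = u') ∧ (e i₂ = v ∨ e i₂ = v'))).card
        = N u v + N u v' + N u' v + N u' v' := by
      have hpt : ∀ e ∈ E,
          (if ((e i₁ = u ∨ e i₁ = u') ∧ (e i₂ = v ∨ e i₂ = v')) then 1 else 0) =
          (((if (e i₁ = u ∧ e i₂ = v) then 1 else 0) + (if (e i₁ = u ∧ e i₂ = v') then 1 else 0))
          + (if (e i₁ = u' ∧ e i₂ = v) then 1 else 0)) + (if (e i₁ = u' ∧ e i₂ = v') then 1 else 0) := by
        intro e _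
        by_cases p1 : e i₁ = u <;> by_cases p2 : e i₁ = u' <;>
          by_cases p3 : e i₂ = v <;> by_cases p4 : e i₂ = v' <;> simp_all
      rw [Finset.card_filter, Finset.sum_congr rfl hpt]
      simp only [hN, Finset.card_filter]
      rw [Finset.sum_add_distrib, Finset.sum_add_distrib, Finset.sum_add_distrib]
    rw [hsum] at hev
    exact Nat.even_iff.mp hev
  -- (3) coverage
  have hrow : ∀ u ∈ V i₁, ∃ v ∈ V i₂, 1 ≤ N u v := by
    intro u hu
    obtain ⟨e, he, heu⟩ := hniso i₁ u hu
    refine ⟨e i₂, hEV e he i₂, ?_⟩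
    have : e ∈ E.filter fun e' => e' i₁ = u ∧ e' i₂ = e i₂ :=
      Finset.mem_filter.mpr ⟨he, heu, rfl⟩
    simpa [hN] using Finset.card_pos.mpr ⟨e, this⟩
  have hcol : ∀ v ∈ V i₂, ∃ u ∈ V i₁, 1 ≤ N u v := by
    intro v hv
    obtain ⟨e, he, hev⟩ := hniso i₂ v hv
    refine ⟨e i₁, hEV e he i₁, ?_⟩
    have : e ∈ E.filter fun e' => e' i₁ = e i₁ ∧ e' i₂ = v :=
      Finset.mem_filter.mpr ⟨he, rfl, hev⟩
    simpa [hN] using Finset.card_pos.mpr ⟨e, this⟩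
  have hk := key (V i₁) (V i₂) N (by omega) (by omega) hparN hrow hcol
  rw [hA, hB] at hk
  omega

theorem octahedral_two_two_ab (n a b : ℕ) (hn : 2 ≤ n) (ha : 2 ≤ a) (hb : 2 ≤ b) :
    (∀ (α : Type) [DecidableEq α] (V : Fin n → Finset α) (E : Finset (Fin n → α)),
      (∀ i j : Fin n, i ≠ j → Disjoint (V i) (V j)) →
      (∀ i : Fin n, (i : ℕ) < n - 2 → (V i).card = 2) →
      (V ⟨n - 2, by omega⟩).card = a →
      (V ⟨n - 1, by omega⟩).card = b →
      IsOctahedralSystem V E → NoIsolatedVertex V E →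
      a + b - 2 ≤ E.card) ∧
    (∃ (V : Fin n → Finset ℕ) (E : Finset (Fin n → ℕ)),
      (∀ i j : Fin n, i ≠ j → Disjoint (V i) (V j)) ∧
      (∀ i : Fin n, (i : ℕ) < n - 2 → (V i).card = 2) ∧
      (V ⟨n - 2, by omega⟩).card = a ∧
      (V ⟨n - 1, by omega⟩).card = b ∧
      IsOctahedralSystem V E ∧ NoIsolatedVertex V E ∧
      E.card = a + b - 2) := by
  constructor
  · intro α _ V E hdisj h2 hA hB hoct hniso
    exact lb n a b hn ha hb α V E hdisj h2 ⟨n - 2, by omega⟩ ⟨n - 1, by omega⟩ rfl rfl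
      hA hB hoct hniso
  · exact construction n a b hn ha hb
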